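/- There exist a, b ∈ ℂ with |a|² + |b|² = 1, giving the qubit unitary U = [[a, b], [−conj(b), conj(a)]], and a qubit density matrix ρ, such that for every θ ∈ ℝ: C_{l1}(ρ) − C_{l1}(U ρ U†) > 1 − C_{l1}(U ψ_θ ψ_θ† U†). That is, the generalized de-cohering power of U (the supremum of the l1-coherence decrease over all density matrices) strictly exceeds its de-cohering power (the maximum of the decrease over maximally coherent states); the two de-cohering powers are not equal in general for qubit unitaries. -/

import Mathlib

open Matrix BigOperators ComplexOrder

/-- The l1-coherence of a matrix: the sum of the absolute values of its
off-diagonal entries. -/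
noncomputable def Cl1 {n : ℕ} (A : Matrix (Fin n) (Fin n) ℂ) : ℝ :=
  ∑ i, ∑ j, if i ≠ j then ‖A i j‖ else 0

/-- A density matrix: positive semidefinite with trace 1. -/
def IsDensity {n : ℕ} (ρ : Matrix (Fin n) (Fin n) ℂ) : Prop :=
  ρ.PosSemidef ∧ ρ.trace = 1

/-- A quantum operation (CPTP map) given by a finite family of Kraus operators. -/
def IsQuantumOp {n : ℕ} (Φ : Matrix (Fin n) (Fin n) ℂ → Matrix (Fin n) (Fin n) ℂ) : Prop :=
  ∃ (m : ℕ) (K : Fin m → Matrix (Fin n) (Fin n) ℂ),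
    (∑ i, (K i)ᴴ * K i) = 1 ∧ ∀ ρ, Φ ρ = ∑ i, K i * ρ * (K i)ᴴ

/-- The dephasing map `Δ`, keeping only the diagonal part of a matrix. -/
def Deph {n : ℕ} (A : Matrix (Fin n) (Fin n) ℂ) : Matrix (Fin n) (Fin n) ℂ :=
  Matrix.of fun i j => if i = j then A i j else 0

/-- The maximally coherent qubit state vector `(1/√2)(1, e^{iθ})`. -/
noncomputable def psi (θ : ℝ) : Fin 2 → ℂ :=
  ![1 / (Real.sqrt 2 : ℂ), Complex.exp (θ * Complex.I) / (Real.sqrt 2 : ℂ)]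

/-- The outer product `w w†` of a vector with itself. -/
def outer {n : ℕ} (w : Fin n → ℂ) : Matrix (Fin n) (Fin n) ℂ :=
  Matrix.vecMulVec w (star w)

/-- The qubit unitary `[[a, b], [-conj b, conj a]]`. -/
def Uab (a b : ℂ) : Matrix (Fin 2) (Fin 2) ℂ :=
  !![a, b; -(starRingEnd ℂ) b, (starRingEnd ℂ) a]

/-- The binary entropy (base 2), with the convention `0 · log 0 = 0`. -/
noncomputable def H (x : ℝ) : ℝ :=
  -(x * Real.logb 2 x) - (1 - x) * Real.logb 2 (1 - x)

theorem generalized_decohering_power_gt_decohering_power_l1 :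
    ∃ a b : ℂ, ‖a‖ ^ 2 + ‖b‖ ^ 2 = 1 ∧
      ∃ ρ : Matrix (Fin 2) (Fin 2) ℂ, IsDensity ρ ∧
        ∀ θ : ℝ,
          1 - Cl1 (outer ((Uab a b).mulVec (psi θ))) <
            Cl1 ρ - Cl1 (Uab a b * ρ * (Uab a b)ᴴ) := by
  refine ⟨4/5, 3/5, ?_, outer ![4/5, 3/5], ⟨?_, ?_⟩, ?_⟩
  · simp [map_div₀]
    norm_num
  · rw [outer, Matrix.vecMulVec_eq (ι := Unit)]
    have h : Matrix.replicateRow Unit (star ![(4:ℂ)/5, 3/5]) = (Matrix.replicateCol Unit ![(4:ℂ)/5, 3/5])ᴴ := by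
      ext i j; simp [Matrix.replicateRow, Matrix.replicateCol]
    rw [h]
    exact Matrix.posSemidef_self_mul_conjTranspose _
  · simp [-Matrix.cons_vecMulVec, outer, Matrix.trace, Fin.sum_univ_two, Matrix.vecMulVec_apply, Complex.star_def,
      map_div₀, map_ofNat]
    norm_num
  intro θ
  -- the coherence of ρ is 24/25
  have hCl1rho : Cl1 (outer ![(4:ℂ)/5, 3/5]) = 24/25 := by
    simp [Cl1, Fin.sum_univ_two, outer, Matrix.vecMulVec_apply, Complex.star_def, map_div₀,
      map_ofNat]
    norm_num
  -- U ρ Uᴴ is diagonal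
  have hU : Uab (4/5) (3/5) * outer ![(4:ℂ)/5, 3/5] * (Uab (4/5) (3/5))ᴴ = !![1,0;0,0] := by
    ext i j
    fin_cases i <;> fin_cases j <;>
      simp [-Matrix.cons_vecMulVec, Uab, outer, Matrix.mul_apply, Fin.sum_univ_two, Matrix.vecMulVec_apply,
        Complex.star_def, map_div₀, map_ofNat, Matrix.conjTranspose_apply, Matrix.vecMul,
        dotProduct, Pi.star_apply] <;> norm_num
  have hCl1U : Cl1 (Uab (4/5) (3/5) * outer ![(4:ℂ)/5, 3/5] * (Uab (4/5) (3/5))ᴴ) = 0 := by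
    rw [hU]; simp [Cl1, Fin.sum_univ_two]
  -- lower bound on the coherence of the rotated maximally coherent state
  set e := Complex.exp (θ * Complex.I) with he
  have habse : ‖e‖ = 1 := Complex.norm_exp_ofReal_mul_I θ
  have hs2 : (0:ℝ) < Real.sqrt 2 := by positivity
  have hs2c : ((Real.sqrt 2 : ℝ) : ℂ) ≠ 0 := by
    simpa using ne_of_gt hs2
  have hw0 : (Uab (4/5) (3/5)).mulVec (psi θ) 0 = (4 + 3*e) / (5*(Real.sqrt 2:ℂ)) := by
    simp [Uab, psi, Matrix.mulVec, dotProduct, Fin.sum_univ_two, ← he]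
    field_simp
  have hw1 : (Uab (4/5) (3/5)).mulVec (psi θ) 1 = (-3 + 4*e) / (5*(Real.sqrt 2:ℂ)) := by
    simp [Uab, psi, Matrix.mulVec, dotProduct, Fin.sum_univ_two, ← he, map_div₀,
      map_ofNat]
    field_simp
  have hcon : e * (starRingEnd ℂ) e = 1 := by
    rw [Complex.mul_conj]
    norm_cast
    rw [Complex.normSq_eq_norm_sq, habse]; norm_num
  have h1 : (-3 + 4*e) = e * (starRingEnd ℂ) (4 - 3*e) := by
    have h2 : e * (starRingEnd ℂ) ((4:ℂ) - 3*e) = 4*e - 3*(e * (starRingEnd ℂ) e) := by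
      simp [map_sub, _root_.map_mul, map_ofNat]; ring
    rw [h2, hcon]; ring
  have habs1 : ‖(-3 + 4*e)‖ = ‖(4 - 3*e)‖ := by
    rw [h1, norm_mul, habse, Complex.norm_conj, one_mul]
  have hkey : 7 ≤ ‖(4 + 3*e)‖ * ‖(-3 + 4*e)‖ := by
    rw [habs1, ← norm_mul]
    have h2 : ((4:ℂ) + 3*e) * (4 - 3*e) = 16 - 9*e^2 := by ring
    rw [h2]
    have htr : ‖(16:ℂ)‖ ≤ ‖(16 - 9*e^2)‖ + ‖(9*e^2)‖ := by
      calc ‖(16:ℂ)‖ = ‖((16 - 9*e^2) + 9*e^2)‖ := by ring_nf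
        _ ≤ _ := norm_add_le _ _
    have h9 : ‖(9*e^2)‖ = 9 := by
      rw [norm_mul, norm_pow, habse]; simp
    have h16 : ‖(16:ℂ)‖ = 16 := by simp
    linarith
  have ha5 : ‖(5*(Real.sqrt 2:ℂ))‖ = 5 * Real.sqrt 2 := by
    rw [norm_mul, Complex.norm_real, Real.norm_eq_abs, abs_of_nonneg (le_of_lt hs2)]
    simp
  have haw0 : ‖((Uab (4/5) (3/5)).mulVec (psi θ) 0)‖
      = ‖(4 + 3*e)‖ / (5 * Real.sqrt 2) := by
    rw [hw0, norm_div, ha5]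
  have haw1 : ‖((Uab (4/5) (3/5)).mulVec (psi θ) 1)‖
      = ‖(-3 + 4*e)‖ / (5 * Real.sqrt 2) := by
    rw [hw1, norm_div, ha5]
  have hCl1psi : Cl1 (outer ((Uab (4/5) (3/5)).mulVec (psi θ)))
      = 2 * (‖((Uab (4/5) (3/5)).mulVec (psi θ) 0)‖
          * ‖((Uab (4/5) (3/5)).mulVec (psi θ) 1)‖) := by
    simp [Cl1, Fin.sum_univ_two, outer, Matrix.vecMulVec_apply, Pi.star_apply, norm_mul,
      Complex.norm_conj]
    ring
  have hfinal : 7/25 ≤ Cl1 (outer ((Uab (4/5) (3/5)).mulVec (psi θ))) := by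
    rw [hCl1psi, haw0, haw1]
    have h3 : 2 * (‖(4 + 3*e)‖ / (5 * Real.sqrt 2)
        * (‖(-3 + 4*e)‖ / (5 * Real.sqrt 2)))
        = ‖(4 + 3*e)‖ * ‖(-3 + 4*e)‖ / 25 := by
      field_simp
      ring_nf
      rw [Real.sq_sqrt (by norm_num : (2:ℝ) ≥ 0)]
      ring
    rw [h3]
    linarith
  rw [hCl1rho, hCl1U]
  linarith
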